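/- arXiv:2108.06732 — 2 statements merged into one kernel-verified Lean document; each statement's English description precedes it below -/
import Mathlib

section
/- Let P ∈ ℤ[x] be a nonconstant polynomial and let q ≥ 2 be an integer. Then the set S = {n ∈ ℕ : there exists k ∈ ℕ with P(n) = q^k} has upper asymptotic density zero, i.e., limsup_{m→∞} #(S ∩ [0,m])/m = 0. -/
open Filter Polynomial

/-- Upper asymptotic density of a set of natural numbers. -/
noncomputable def upperDensity (U : Set ℕ) : ℝ :=
  Filter.atTop.limsup (fun m : ℕ => ((U ∩ Set.Iic m).ncard : ℝ) / m)

lemma aux_ncard_biUnion_le (s : Finset ℕ) (T : ℕ → Set ℕ) :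
    (⋃ k ∈ s, T k).ncard ≤ ∑ k ∈ s, (T k).ncard := by
  classical
  induction s using Finset.cons_induction with
  | empty => simp
  | cons a s ha ih =>
    rw [Finset.sum_cons]
    calc (⋃ k ∈ Finset.cons a s ha, T k).ncard
        = (T a ∪ ⋃ k ∈ s, T k).ncard := by
          congr 1; simp [Finset.mem_cons, Set.iUnion_or, Set.iUnion_union_distrib]
      _ ≤ (T a).ncard + (⋃ k ∈ s, T k).ncard := Set.ncard_union_le _ _
      _ ≤ _ := by omega

lemma aux_root_ncard (p : Polynomial ℤ) (hp : p ≠ 0) :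
    {x : ℤ | p.IsRoot x}.ncard ≤ p.natDegree := by
  have hset : {x : ℤ | p.IsRoot x} = (p.roots.toFinset : Set ℤ) := by
    ext x; simp [Multiset.mem_toFinset, mem_roots hp]
  rw [hset, Set.ncard_coe_finset]
  calc p.roots.toFinset.card ≤ Multiset.card p.roots := Multiset.toFinset_card_le _
    _ ≤ p.natDegree := p.card_roots'

lemma aux_log_div_tendsto :
    Tendsto (fun m : ℕ => Real.log (m + 1) / m) atTop (nhds 0) := by
  have h1 : Tendsto (fun x : ℝ => Real.log x / x) atTop (nhds 0) :=
    Real.isLittleO_log_id_atTop.tendsto_div_nhds_zero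
  have h2 : Tendsto (fun m : ℕ => ((m : ℝ) + 1)) atTop atTop :=
    tendsto_natCast_atTop_atTop.atTop_add tendsto_const_nhds
  have h3 : Tendsto (fun m : ℕ => Real.log (m + 1) / (m + 1)) atTop (nhds 0) :=
    h1.comp h2
  have h4 : Tendsto (fun m : ℕ => ((m : ℝ) + 1) / m) atTop (nhds 1) := by
    have : Tendsto (fun m : ℕ => 1 + 1 / (m : ℝ)) atTop (nhds (1 + 0)) :=
      tendsto_const_nhds.add tendsto_one_div_atTop_nhds_zero_nat
    rw [add_zero] at this
    refine this.congr' ?_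
    filter_upwards [eventually_gt_atTop 0] with m hm
    have hm' : (m : ℝ) ≠ 0 := Nat.cast_ne_zero.mpr hm.ne'
    field_simp
  have := h3.mul h4
  rw [zero_mul] at this
  refine this.congr' ?_
  filter_upwards [eventually_gt_atTop 0] with m hm
  have hm' : (m : ℝ) ≠ 0 := Nat.cast_ne_zero.mpr hm.ne'
  field_simp

theorem stmt_8 (P : Polynomial ℤ) (hP : 0 < P.natDegree) (q : ℤ) (hq : 2 ≤ q) :
    upperDensity {n : ℕ | ∃ k : ℕ, P.eval (n : ℤ) = q ^ k} = 0 := by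
  classical
  set d := P.natDegree with hd
  set S := {n : ℕ | ∃ k : ℕ, P.eval (n : ℤ) = q ^ k} with hSdef
  set C0 : ℕ := ∑ i ∈ Finset.range (d + 1), (P.coeff i).natAbs with hC0
  set B : ℕ → ℕ := fun m => C0 * (m + 1) ^ d with hBdef
  have hPne : P ≠ 0 := fun h => by simp [hd, h] at hP
  have hC0pos : 0 < C0 := by
    have h1 : P.coeff d ≠ 0 := by
      simpa [hd] using Polynomial.leadingCoeff_ne_zero.mpr hPne
    have : 1 ≤ (P.coeff d).natAbs := Int.natAbs_pos.mpr h1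
    calc 1 ≤ (P.coeff d).natAbs := this
      _ ≤ C0 := Finset.single_le_sum (f := fun i => (P.coeff i).natAbs)
          (fun _ _ => Nat.zero_le _) (Finset.self_mem_range_succ d)
  -- eval bound
  have heval : ∀ m n : ℕ, n ≤ m → |P.eval (n : ℤ)| ≤ (B m : ℤ) := by
    intro m n hnm
    rw [Polynomial.eval_eq_sum_range]
    calc |∑ i ∈ Finset.range (d + 1), P.coeff i * (n : ℤ) ^ i|
        ≤ ∑ i ∈ Finset.range (d + 1), |P.coeff i * (n : ℤ) ^ i| :=
          Finset.abs_sum_le_sum_abs _ _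
      _ ≤ ∑ i ∈ Finset.range (d + 1), ((P.coeff i).natAbs : ℤ) * ((m : ℤ) + 1) ^ d := by
          apply Finset.sum_le_sum
          intro i hi
          rw [abs_mul, abs_pow, Int.abs_eq_natAbs, abs_of_nonneg (Int.natCast_nonneg n)]
          apply mul_le_mul_of_nonneg_left _ (Int.natCast_nonneg _)
          calc (n : ℤ) ^ i ≤ ((m : ℤ) + 1) ^ i := by
                apply pow_le_pow_left₀ (Int.natCast_nonneg n)
                exact_mod_cast Nat.le_succ_of_le hnm
            _ ≤ ((m : ℤ) + 1) ^ d := by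
                apply pow_le_pow_right₀ (by linarith [Int.natCast_nonneg m])
                have := Finset.mem_range.mp hi; omega
      _ = (B m : ℤ) := by
          rw [← Finset.sum_mul]
          push_cast [hBdef, hC0]
          ring
  -- bound on exponents
  have hkb : ∀ m n k : ℕ, n ≤ m → P.eval (n : ℤ) = q ^ k → k ≤ Nat.log 2 (B m) := by
    intro m n k hnm hk
    have h2 : (2 : ℤ) ^ k ≤ (B m : ℤ) := by
      calc (2 : ℤ) ^ k ≤ q ^ k := pow_le_pow_left₀ (by norm_num) hq k
        _ = P.eval (n : ℤ) := hk.symm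
        _ ≤ |P.eval (n : ℤ)| := le_abs_self _
        _ ≤ (B m : ℤ) := heval m n hnm
    have h2' : 2 ^ k ≤ B m := by exact_mod_cast h2
    have hB0 : B m ≠ 0 := by
      have : (1 : ℕ) ≤ 2 ^ k := Nat.one_le_two_pow
      omega
    exact (Nat.le_log_iff_pow_le one_lt_two hB0).mpr h2'
  -- each fiber is small
  have hT : ∀ k : ℕ, {n : ℕ | P.eval (n : ℤ) = q ^ k}.Finite ∧
      {n : ℕ | P.eval (n : ℤ) = q ^ k}.ncard ≤ d := by
    intro k
    set Q : Polynomial ℤ := P - Polynomial.C (q ^ k) with hQ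
    have hQd : Q.natDegree = d := Polynomial.natDegree_sub_C
    have hQne : Q ≠ 0 := fun h => by rw [h] at hQd; simp [hd] at hQd; omega
    have hpre : {n : ℕ | P.eval (n : ℤ) = q ^ k} =
        (fun n : ℕ => (n : ℤ)) ⁻¹' {x : ℤ | Q.IsRoot x} := by
      ext n
      simp [hQ, Polynomial.IsRoot, sub_eq_zero]
    have hfin : {n : ℕ | P.eval (n : ℤ) = q ^ k}.Finite := by
      rw [hpre]
      exact (Polynomial.finite_setOf_isRoot hQne).preimage
        (Set.injOn_of_injective (Nat.cast_injective : Function.Injective (Nat.cast : ℕ → ℤ)))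
    refine ⟨hfin, ?_⟩
    have himg : ((fun n : ℕ => (n : ℤ)) '' {n : ℕ | P.eval (n : ℤ) = q ^ k}).ncard
        ≤ {x : ℤ | Q.IsRoot x}.ncard := by
      apply Set.ncard_le_ncard _ (Polynomial.finite_setOf_isRoot hQne)
      rw [hpre]
      exact Set.image_preimage_subset _ _
    rw [Set.ncard_image_of_injective _ (Nat.cast_injective : Function.Injective (Nat.cast : ℕ → ℤ))] at himg
    calc {n : ℕ | P.eval (n : ℤ) = q ^ k}.ncard ≤ {x : ℤ | Q.IsRoot x}.ncard := himg
      _ ≤ Q.natDegree := aux_root_ncard Q hQne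
      _ = d := hQd
  -- counting bound
  have hcard : ∀ m : ℕ, (S ∩ Set.Iic m).ncard ≤ (Nat.log 2 (B m) + 1) * d := by
    intro m
    set L := Nat.log 2 (B m) with hL
    have hsub : S ∩ Set.Iic m ⊆
        ⋃ k ∈ Finset.range (L + 1), {n : ℕ | P.eval (n : ℤ) = q ^ k} := by
      rintro n ⟨⟨k, hk⟩, hnm⟩
      have hkL : k ≤ L := hkb m n k hnm hk
      exact Set.mem_biUnion (Finset.mem_range.mpr (by omega)) hk
    calc (S ∩ Set.Iic m).ncard
        ≤ (⋃ k ∈ Finset.range (L + 1), {n : ℕ | P.eval (n : ℤ) = q ^ k}).ncard :=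
          Set.ncard_le_ncard hsub (Set.Finite.biUnion
            (Finset.range (L + 1)).finite_toSet (fun k _ => (hT k).1))
      _ ≤ ∑ k ∈ Finset.range (L + 1), {n : ℕ | P.eval (n : ℤ) = q ^ k}.ncard :=
          aux_ncard_biUnion_le _ _
      _ ≤ ∑ _k ∈ Finset.range (L + 1), d := Finset.sum_le_sum (fun k _ => (hT k).2)
      _ = (L + 1) * d := by simp [Finset.sum_const, mul_comm]
  -- analysis
  set f : ℕ → ℝ := fun m => (((S ∩ Set.Iic m).ncard : ℝ)) / m with hf
  set h : ℕ → ℝ := fun m =>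
    ((Real.log C0 + d * Real.log (m + 1)) / Real.log 2 + 1) * d / m with hh
  have hfh : ∀ᶠ m in atTop, f m ≤ h m := by
    filter_upwards [eventually_ge_atTop 1] with m hm
    have hm0 : (0 : ℝ) < m := by exact_mod_cast hm
    have h1 : ((S ∩ Set.Iic m).ncard : ℝ) ≤ ((Nat.log 2 (B m) : ℝ) + 1) * d := by
      exact_mod_cast hcard m
    have hlogB : Real.logb 2 (B m) = (Real.log C0 + d * Real.log ((m : ℝ) + 1)) / Real.log 2 := by
      have hC0ne : (C0 : ℝ) ≠ 0 := by positivity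
      have hub : ((B m : ℕ) : ℝ) = (C0 : ℝ) * ((m : ℝ) + 1) ^ d := by
        simp only [hBdef]
        push_cast
        ring
      rw [Real.logb, hub, Real.log_mul hC0ne (by positivity), Real.log_pow]
    have h2 : (Nat.log 2 (B m) : ℝ) ≤ (Real.log C0 + d * Real.log ((m : ℝ) + 1)) / Real.log 2 := by
      calc (Nat.log 2 (B m) : ℝ) ≤ Real.logb 2 (B m) := Real.natLog_le_logb _ _
        _ = _ := hlogB
    have h3 : ((S ∩ Set.Iic m).ncard : ℝ) ≤
        ((Real.log C0 + d * Real.log ((m : ℝ) + 1)) / Real.log 2 + 1) * d := by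
      have hd0 : (0 : ℝ) ≤ (d : ℝ) := Nat.cast_nonneg d
      nlinarith [h1, h2]
    simp only [hf, hh]
    gcongr
  have hh0 : Tendsto h atTop (nhds 0) := by
    have hrw : h = fun m : ℕ =>
        ((Real.log C0 / Real.log 2 + 1) * d) * (1 / m)
          + ((d : ℝ) * d / Real.log 2) * (Real.log (m + 1) / m) := by
      funext m
      simp only [hh]
      ring
    rw [hrw]
    have := (tendsto_one_div_atTop_nhds_zero_nat.const_mul
        ((Real.log C0 / Real.log 2 + 1) * d)).add
      (aux_log_div_tendsto.const_mul ((d : ℝ) * d / Real.log 2))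
    simpa using this
  have hf0 : ∀ᶠ m in atTop, (0 : ℝ) ≤ f m :=
    Eventually.of_forall (fun m => by
      simp only [hf]; positivity)
  have hft : Tendsto f atTop (nhds 0) :=
    tendsto_of_tendsto_of_tendsto_of_le_of_le' tendsto_const_nhds hh0 hf0 hfh
  rw [upperDensity]
  exact hft.limsup_eq
end

section
/- Let K be a division ring with center k, and let A ∈ M_n(K) be a matrix whose minimal polynomial over k factors as p(x) = p₁(x)·p₂(x) with p₁, p₂ ∈ k[x] coprime (i.e., there exist u, v ∈ k[x] with u·p₁ + v·p₂ = 1). Then there exists an invertible matrix P ∈ M_n(K) such that P^{-1} A P is block diagonal, P^{-1} A P = A₁ ⊕ A₂, where p₁(A₁) = 0 and p₂(A₂) = 0. -/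
open Polynomial

namespace Stmt11Aux
open Matrix

variable {K : Type*} [DivisionRing K] {n : ℕ}


variable {K : Type*} [DivisionRing K] {n : ℕ}

lemma vecMul_sum_smul {m : ℕ} (A : Matrix (Fin n) (Fin n) K) (c : Fin m → K)
    (w : Fin m → Fin n → K) :
    (∑ j, c j • w j) ᵥ* A = ∑ j, c j • (w j ᵥ* A) := by
  have : ∀ v : Fin n → K, v ᵥ* A = Matrix.vecMulLinear A v := fun v => rfl
  rw [this, map_sum]
  exact Finset.sum_congr rfl fun j _ => (A.vecMulLinear).map_smul (c j) (w j)

lemma key_aux {W : Submodule K (Fin n → K)} {m : ℕ} (b : Module.Basis (Fin m) K W)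
    {A : Matrix (Fin n) (Fin n) K} {B : Matrix (Fin m) (Fin m) K}
    (hB : ∀ i, (b i : Fin n → K) ᵥ* A = ∑ j, B i j • (b j : Fin n → K))
    (q : Polynomial (Subring.center K)) :
    ∀ i, (b i : Fin n → K) ᵥ* (aeval A q) = ∑ j, (aeval B q) i j • (b j : Fin n → K) := by
  induction q using Polynomial.induction_on with
  | C a =>
    intro i
    funext l
    simp only [aeval_C, Matrix.vecMul, dotProduct, Matrix.algebraMap_matrix_apply,
      mul_ite, mul_zero, Finset.sum_ite_eq', Finset.mem_univ, if_true, Finset.sum_apply,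
      Pi.smul_apply, smul_eq_mul, ite_mul, zero_mul, Finset.sum_ite_eq]
    exact Subring.mem_center_iff.mp a.2 _
  | add q r hq hr =>
    intro i
    simp only [map_add, Matrix.vecMul_add, hq i, hr i, Matrix.add_apply, add_smul,
      Finset.sum_add_distrib]
  | monomial m a ih =>
    intro i
    have h1 : (C a * X ^ (m + 1)) = (C a * X ^ m) * X := by ring
    have e1 : (aeval A) (C a * X ^ m * X) = (aeval A) (C a * X ^ m) * A := by
      rw [_root_.map_mul, aeval_X]
    have e2 : (aeval B) (C a * X ^ m * X) = (aeval B) (C a * X ^ m) * B := by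
      rw [_root_.map_mul, aeval_X]
    rw [h1, e1, e2, ← Matrix.vecMul_vecMul, ih i, vecMul_sum_smul]
    have h2 : ∀ j, ((aeval B (C a * X ^ m)) i j) • ((b j : Fin n → K) ᵥ* A)
        = ∑ l, ((aeval B (C a * X ^ m)) i j * B j l) • (b l : Fin n → K) := by
      intro j
      rw [hB j, Finset.smul_sum]
      simp only [smul_smul]
    simp only [h2]
    rw [Finset.sum_comm]
    congr 1
    funext l
    rw [← Finset.sum_smul, Matrix.mul_apply]

lemma annih_aux {W : Submodule K (Fin n → K)} {m : ℕ} (b : Module.Basis (Fin m) K W)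
    {A : Matrix (Fin n) (Fin n) K} {B : Matrix (Fin m) (Fin m) K}
    (hB : ∀ i, (b i : Fin n → K) ᵥ* A = ∑ j, B i j • (b j : Fin n → K))
    (q : Polynomial (Subring.center K))
    (hkill : ∀ i, (b i : Fin n → K) ᵥ* (aeval A q) = 0) :
    aeval B q = 0 := by
  have li : LinearIndependent K (fun j : Fin m => (b j : Fin n → K)) :=
    b.linearIndependent.map' W.subtype W.ker_subtype
  ext i j
  have h0 : ∑ l, (aeval B q) i l • (b l : Fin n → K) = 0 := by
    rw [← key_aux b hB q i, hkill i]
  exact Fintype.linearIndependent_iff.mp li _ h0 j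


end Stmt11Aux

open Stmt11Aux Matrix in
set_option maxHeartbeats 1000000 in

theorem stmt_11 {K : Type*} [DivisionRing K] (n : ℕ)
    (A : Matrix (Fin n) (Fin n) K)
    (p p₁ p₂ : Polynomial (Subring.center K))
    (hfact : p = p₁ * p₂)
    (hcoprime : ∃ u v : Polynomial (Subring.center K), u * p₁ + v * p₂ = 1)
    (hann : Polynomial.aeval A p = 0)
    (hmin : ∀ r : Polynomial (Subring.center K), Polynomial.aeval A r = 0 → p ∣ r) :
    ∃ (n₁ n₂ : ℕ) (A₁ : Matrix (Fin n₁) (Fin n₁) K) (A₂ : Matrix (Fin n₂) (Fin n₂) K)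
      (P Pinv : Matrix (Fin n) (Fin n) K) (e : Fin n ≃ (Fin n₁ ⊕ Fin n₂)),
      P * Pinv = 1 ∧ Pinv * P = 1 ∧
      Pinv * A * P = (Matrix.fromBlocks A₁ 0 0 A₂).submatrix e e ∧
      Polynomial.aeval A₁ p₁ = 0 ∧ Polynomial.aeval A₂ p₂ = 0 := by
  classical
  obtain ⟨u, v, huv⟩ := hcoprime
  set E₁ : Matrix (Fin n) (Fin n) K := aeval A (v * p₂) with hE₁
  set E₂ : Matrix (Fin n) (Fin n) K := aeval A (u * p₁) with hE₂
  have hsum : E₂ + E₁ = 1 := by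
    rw [hE₁, hE₂, ← _root_.map_add, huv, _root_.map_one]
  have haeval0 : ∀ r : Polynomial (Subring.center K), p ∣ r → aeval A r = 0 := by
    rintro r ⟨s, rfl⟩
    rw [_root_.map_mul, hann, zero_mul]
  have hcomm : ∀ q r : Polynomial (Subring.center K),
      aeval A q * aeval A r = aeval A (q * r) := fun q r => (_root_.map_mul _ _ _).symm
  have hAq : ∀ q : Polynomial (Subring.center K), A * aeval A q = aeval A q * A := by
    intro q
    have h := hcomm X q
    have h' := hcomm q X
    rw [aeval_X] at h h'
    rw [h, h', mul_comm X q]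
  have hkill1mat : E₁ * aeval A p₁ = 0 := by
    rw [hE₁, hcomm]
    exact haeval0 _ ⟨v, by rw [hfact]; ring⟩
  have hkill2mat : E₂ * aeval A p₂ = 0 := by
    rw [hE₂, hcomm]
    exact haeval0 _ ⟨u, by rw [hfact]; ring⟩
  have hE₁E₂ : E₁ * E₂ = 0 := by
    rw [hE₁, hE₂, hcomm]
    exact haeval0 _ ⟨v * u, by rw [hfact]; ring⟩
  have hE₂E₁ : E₂ * E₁ = 0 := by
    rw [hE₁, hE₂, hcomm]
    exact haeval0 _ ⟨u * v, by rw [hfact]; ring⟩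
  have hidem₁ : E₁ * E₁ = E₁ := by
    have h := congrArg (fun M => E₁ * M) hsum
    simpa [mul_add, hE₁E₂] using h
  have hidem₂ : E₂ * E₂ = E₂ := by
    have h := congrArg (fun M => E₂ * M) hsum
    simpa [mul_add, hE₂E₁] using h
  have hAE₁ : A * E₁ = E₁ * A := hAq _
  have hAE₂ : A * E₂ = E₂ * A := hAq _
  set W₁ : Submodule K (Fin n → K) := LinearMap.range (Matrix.vecMulLinear E₁) with hW₁
  set W₂ : Submodule K (Fin n → K) := LinearMap.range (Matrix.vecMulLinear E₂) with hW₂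
  have hmem₁ : ∀ x : Fin n → K, x ᵥ* E₁ ∈ W₁ := fun x => ⟨x, rfl⟩
  have hmem₂ : ∀ x : Fin n → K, x ᵥ* E₂ ∈ W₂ := fun x => ⟨x, rfl⟩
  have hfix₁ : ∀ w ∈ W₁, w ᵥ* E₁ = w := by
    rintro w ⟨x, rfl⟩
    simp only [Matrix.vecMulLinear_apply, Matrix.vecMul_vecMul, hidem₁]
  have hfix₂ : ∀ w ∈ W₂, w ᵥ* E₂ = w := by
    rintro w ⟨x, rfl⟩
    simp only [Matrix.vecMulLinear_apply, Matrix.vecMul_vecMul, hidem₂]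
  have hinv₁ : ∀ w ∈ W₁, w ᵥ* A ∈ W₁ := by
    rintro w ⟨x, rfl⟩
    refine ⟨x ᵥ* A, ?_⟩
    simp only [Matrix.vecMulLinear_apply, Matrix.vecMul_vecMul, hAE₁]
  have hinv₂ : ∀ w ∈ W₂, w ᵥ* A ∈ W₂ := by
    rintro w ⟨x, rfl⟩
    refine ⟨x ᵥ* A, ?_⟩
    simp only [Matrix.vecMulLinear_apply, Matrix.vecMul_vecMul, hAE₂]
  have hkill₁ : ∀ w ∈ W₁, w ᵥ* aeval A p₁ = 0 := by
    intro w hw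
    rw [← hfix₁ w hw, Matrix.vecMul_vecMul, hkill1mat, Matrix.vecMul_zero]
  have hkill₂ : ∀ w ∈ W₂, w ᵥ* aeval A p₂ = 0 := by
    intro w hw
    rw [← hfix₂ w hw, Matrix.vecMul_vecMul, hkill2mat, Matrix.vecMul_zero]
  have hcompl : IsCompl W₁ W₂ := by
    constructor
    · rw [disjoint_iff, Submodule.eq_bot_iff]
      rintro x ⟨hx₁, hx₂⟩
      obtain ⟨y, rfl⟩ := hx₂
      have h1 : (Matrix.vecMulLinear E₂ y) ᵥ* E₁ = Matrix.vecMulLinear E₂ y := hfix₁ _ hx₁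
      simp only [Matrix.vecMulLinear_apply, Matrix.vecMul_vecMul, hE₂E₁,
        Matrix.vecMul_zero] at h1
      simp only [Matrix.vecMulLinear_apply]
      rw [← h1]
    · rw [codisjoint_iff, eq_top_iff]
      intro x _
      have hx : x = x ᵥ* E₁ + x ᵥ* E₂ := by
        rw [← Matrix.vecMul_add, add_comm E₁ E₂, hsum, Matrix.vecMul_one]
      rw [Submodule.mem_sup]
      exact ⟨x ᵥ* E₁, hmem₁ x, x ᵥ* E₂, hmem₂ x, hx.symm⟩
  set n₁ := Module.finrank K W₁ with hn₁
  set n₂ := Module.finrank K W₂ with hn₂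
  have hn : n₁ + n₂ = n := by
    rw [hn₁, hn₂, Submodule.finrank_add_eq_of_isCompl hcompl, Module.finrank_fin_fun]
  set b₁ : Module.Basis (Fin n₁) K W₁ := Module.finBasis K W₁ with hb₁
  set b₂ : Module.Basis (Fin n₂) K W₂ := Module.finBasis K W₂ with hb₂
  set e : Fin n ≃ (Fin n₁ ⊕ Fin n₂) := (finCongr hn.symm).trans finSumFinEquiv.symm with he
  set A₁ : Matrix (Fin n₁) (Fin n₁) K :=
    Matrix.of fun i j => (b₁.repr ⟨(b₁ i : Fin n → K) ᵥ* A, hinv₁ _ (b₁ i).2⟩ j : K) with hA₁def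
  set A₂ : Matrix (Fin n₂) (Fin n₂) K :=
    Matrix.of fun i j => (b₂.repr ⟨(b₂ i : Fin n → K) ᵥ* A, hinv₂ _ (b₂ i).2⟩ j : K) with hA₂def
  have hB₁ : ∀ i, (b₁ i : Fin n → K) ᵥ* A = ∑ j, A₁ i j • (b₁ j : Fin n → K) := by
    intro i
    have h := b₁.sum_repr ⟨(b₁ i : Fin n → K) ᵥ* A, hinv₁ _ (b₁ i).2⟩
    have h2 := congrArg (fun w : W₁ => (w : Fin n → K)) h
    simp only [Submodule.coe_sum, SetLike.val_smul] at h2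
    exact h2.symm
  have hB₂ : ∀ i, (b₂ i : Fin n → K) ᵥ* A = ∑ j, A₂ i j • (b₂ j : Fin n → K) := by
    intro i
    have h := b₂.sum_repr ⟨(b₂ i : Fin n → K) ᵥ* A, hinv₂ _ (b₂ i).2⟩
    have h2 := congrArg (fun w : W₂ => (w : Fin n → K)) h
    simp only [Submodule.coe_sum, SetLike.val_smul] at h2
    exact h2.symm
  have hannA₁ : aeval A₁ p₁ = 0 := annih_aux b₁ hB₁ p₁ (fun i => hkill₁ _ (b₁ i).2)
  have hannA₂ : aeval A₂ p₂ = 0 := annih_aux b₂ hB₂ p₂ (fun i => hkill₂ _ (b₂ i).2)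
  set c : Module.Basis (Fin n₁ ⊕ Fin n₂) K (Fin n → K) :=
    (b₁.prod b₂).map (Submodule.prodEquivOfIsCompl W₁ W₂ hcompl) with hc
  have hc_inl : ∀ i, c (Sum.inl i) = (b₁ i : Fin n → K) := by
    intro i
    have hpr : (b₁.prod b₂) (Sum.inl i) = (b₁ i, 0) := by
      apply Prod.ext
      · simp [Module.Basis.prod_apply_inl_fst]
      · simp [Module.Basis.prod_apply_inl_snd]
    rw [hc, Module.Basis.map_apply, hpr,
      ← Submodule.prodEquivOfIsCompl_symm_apply_left W₁ W₂ hcompl,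
      LinearEquiv.apply_symm_apply]
  have hc_inr : ∀ i, c (Sum.inr i) = (b₂ i : Fin n → K) := by
    intro i
    have hpr : (b₁.prod b₂) (Sum.inr i) = (0, b₂ i) := by
      apply Prod.ext
      · simp [Module.Basis.prod_apply_inr_fst]
      · simp [Module.Basis.prod_apply_inr_snd]
    rw [hc, Module.Basis.map_apply, hpr,
      ← Submodule.prodEquivOfIsCompl_symm_apply_right W₁ W₂ hcompl,
      LinearEquiv.apply_symm_apply]
  have hrepr₁ : ∀ (w : W₁) (s : Fin n₁ ⊕ Fin n₂),
      c.repr (w : Fin n → K) s = Sum.elim (fun i => b₁.repr w i) (fun _ => 0) s := by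
    intro w s
    rw [hc, Module.Basis.map_repr]
    have hsymm : (Submodule.prodEquivOfIsCompl W₁ W₂ hcompl).symm (w : Fin n → K) = (w, 0) :=
      Submodule.prodEquivOfIsCompl_symm_apply_left W₁ W₂ hcompl w
    cases s with
    | inl i => simp [hsymm, Module.Basis.prod_repr_inl]
    | inr j => simp [hsymm, Module.Basis.prod_repr_inr]
  have hrepr₂ : ∀ (w : W₂) (s : Fin n₁ ⊕ Fin n₂),
      c.repr (w : Fin n → K) s = Sum.elim (fun _ => 0) (fun j => b₂.repr w j) s := by
    intro w s
    rw [hc, Module.Basis.map_repr]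
    have hsymm : (Submodule.prodEquivOfIsCompl W₁ W₂ hcompl).symm (w : Fin n → K) = (0, w) :=
      Submodule.prodEquivOfIsCompl_symm_apply_right W₁ W₂ hcompl w
    cases s with
    | inl i => simp [hsymm, Module.Basis.prod_repr_inl]
    | inr j => simp [hsymm, Module.Basis.prod_repr_inr]
  set Q : Matrix (Fin n₁ ⊕ Fin n₂) (Fin n) K := Matrix.of fun s j => c s j with hQ
  set Qinv : Matrix (Fin n) (Fin n₁ ⊕ Fin n₂) K :=
    Matrix.of fun j s => c.repr (Pi.single j 1) s with hQinv
  have hxdecomp : ∀ x : Fin n → K, x = ∑ j', x j' • (Pi.single j' (1 : K) : Fin n → K) := by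
    intro x
    funext l
    simp [Pi.single_apply, Finset.sum_ite_eq]
  have hreprsum : ∀ (x : Fin n → K) (s' : Fin n₁ ⊕ Fin n₂),
      c.repr x s' = ∑ j', x j' * c.repr (Pi.single j' 1) s' := by
    intro x s'
    conv_lhs => rw [hxdecomp x]
    rw [map_sum, Finsupp.finset_sum_apply]
    exact Finset.sum_congr rfl fun j' _ => by rw [_root_.map_smul, Finsupp.smul_apply, smul_eq_mul]
  have hQinvQ : Qinv * Q = 1 := by
    ext j j'
    rw [Matrix.mul_apply]
    have : ∑ s, Qinv j s * Q s j' = (∑ s, c.repr (Pi.single j 1) s • c s) j' := by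
      rw [Finset.sum_apply]
      exact Finset.sum_congr rfl fun s _ => rfl
    rw [this, c.sum_repr (Pi.single j 1)]
    by_cases h : j = j' <;> simp [Pi.single_apply, Matrix.one_apply, h]
  have hQQinv : Q * Qinv = 1 := by
    ext s s'
    rw [Matrix.mul_apply]
    have : ∑ j, Q s j * Qinv j s' = c.repr (c s) s' := by
      rw [hreprsum (c s) s']
      exact Finset.sum_congr rfl fun j _ => rfl
    rw [this, c.repr_self]
    by_cases h : s = s' <;> simp [Finsupp.single_apply, Matrix.one_apply, h]
  have hQMQ : ∀ (M : Matrix (Fin n) (Fin n) K) (s s' : Fin n₁ ⊕ Fin n₂),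
      (Q * M * Qinv) s s' = c.repr ((c s) ᵥ* M) s' := by
    intro M s s'
    rw [Matrix.mul_apply, hreprsum ((c s) ᵥ* M) s']
    exact Finset.sum_congr rfl fun j' _ => rfl
  have hQAQ : Q * A * Qinv = Matrix.fromBlocks A₁ 0 0 A₂ := by
    ext s s'
    rw [hQMQ A s s']
    cases s with
    | inl i =>
      rw [hc_inl i]
      have hval : (b₁ i : Fin n → K) ᵥ* A
          = ((⟨(b₁ i : Fin n → K) ᵥ* A, hinv₁ _ (b₁ i).2⟩ : W₁) : Fin n → K) := rfl
      rw [hval, hrepr₁]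
      cases s' with
      | inl i' => simp [hA₁def, Matrix.fromBlocks_apply₁₁]
      | inr j' => simp [Matrix.fromBlocks_apply₁₂]
    | inr j =>
      rw [hc_inr j]
      have hval : (b₂ j : Fin n → K) ᵥ* A
          = ((⟨(b₂ j : Fin n → K) ᵥ* A, hinv₂ _ (b₂ j).2⟩ : W₂) : Fin n → K) := rfl
      rw [hval, hrepr₂]
      cases s' with
      | inl i' => simp [Matrix.fromBlocks_apply₂₁]
      | inr j' => simp [hA₂def, Matrix.fromBlocks_apply₂₂]
  set P : Matrix (Fin n) (Fin n) K := Qinv.submatrix id ⇑e with hP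
  set Pinv : Matrix (Fin n) (Fin n) K := Q.submatrix ⇑e id with hPinv
  have hPPinv : P * Pinv = 1 := by
    rw [hP, hPinv, Matrix.submatrix_mul_equiv Qinv Q id e id, hQinvQ, Matrix.submatrix_id_id]
  have hPinvP : Pinv * P = 1 := by
    have h := Matrix.submatrix_mul_equiv Q Qinv ⇑e (Equiv.refl (Fin n)) ⇑e
    simp only [Equiv.coe_refl] at h
    rw [hP, hPinv, h, hQQinv, Matrix.submatrix_one_equiv]
  have hconj : Pinv * A * P = (Matrix.fromBlocks A₁ 0 0 A₂).submatrix e e := by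
    have h1 : Pinv * A = (Q * A).submatrix ⇑e id := by
      have h := Matrix.submatrix_mul_equiv Q A ⇑e (Equiv.refl (Fin n)) (id : Fin n → Fin n)
      simp only [Equiv.coe_refl, Matrix.submatrix_id_id] at h
      rw [hPinv, ← h]
    have h2 : (Q * A).submatrix ⇑e id * P = (Q * A * Qinv).submatrix ⇑e ⇑e := by
      have h := Matrix.submatrix_mul_equiv (Q * A) Qinv ⇑e (Equiv.refl (Fin n)) ⇑e
      simp only [Equiv.coe_refl] at h
      rw [hP, ← h]
    rw [h1, h2, hQAQ]
  exact ⟨n₁, n₂, A₁, A₂, P, Pinv, e, hPPinv, hPinvP, hconj, hannA₁, hannA₂⟩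
end
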